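/- For any positive integers r, h, w, p there exists a positive integer s = s(r,h,w,p) such that: for every graph G with no K_{r,r}-subgraph and collections C₁, …, C_p, each consisting of pairwise disjoint subsets of V(G) of size at most h with |C_i| ≥ s for all i, there exist subsets C_i' ⊆ C_i with |C_i'| = w for each i such that for all 1 ≤ i₁ < i₂ ≤ p, every member of C_{i₁}' is disjoint from and non-adjacent in G to every member of C_{i₂}'. -/

import Mathlib

open Finset

/-- "No `K_{r,r}` subgraph" predicate. -/
def NoKrr (r : ℕ) {W : Type} (G : SimpleGraph W) : Prop :=
  ¬ ∃ A B : Finset W, A.card = r ∧ B.card = r ∧ Disjoint A B ∧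
      ∀ a ∈ A, ∀ b ∈ B, G.Adj a b

/-- Two finsets are disjoint and non-adjacent. -/
def SepG {W : Type} (G : SimpleGraph W) (S T : Finset W) : Prop :=
  Disjoint S T ∧ ∀ a ∈ S, ∀ b ∈ T, ¬ G.Adj a b

/-- Row lemma: iterated pigeonhole giving many rows each monochromatic on a common
large column set. -/
lemma rowLemma (κ : Type) [Fintype κ] [DecidableEq κ] (c : ℕ) (hc : Fintype.card κ ≤ c)
    (m : ℕ) :
    ∀ (α β : Type) [DecidableEq α] [DecidableEq β]
      (X : Finset α) (Y : Finset β) (f : α → β → κ), m ≤ X.card →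
      ∃ A B, A ⊆ X ∧ B ⊆ Y ∧ A.card = m ∧ Y.card ≤ c ^ m * B.card ∧
        ∀ a ∈ A, ∀ b ∈ B, ∀ b' ∈ B, f a b = f a b' := by
  induction m with
  | zero =>
    intro α β _ _ X Y f _
    exact ⟨∅, Y, empty_subset _, subset_rfl, card_empty, by simp, by simp⟩
  | succ m ih =>
    intro α β _ _ X Y f hm
    have hXne : X.Nonempty := card_pos.mp (by omega)
    obtain ⟨x, hx⟩ := hXne
    have hcard : m ≤ (X.erase x).card := by
      rw [card_erase_of_mem hx]; omega
    obtain ⟨A, B, hAX, hBY, hAcard, hYB, hrows⟩ := ih α β (X.erase x) Y f hcard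
    have hsubX : insert x A ⊆ X := by
      intro z hz
      rcases mem_insert.mp hz with rfl | hz
      · exact hx
      · exact (erase_subset _ _) (hAX hz)
    have hcardins : (insert x A).card = m + 1 := by
      rw [card_insert_of_notMem (fun h => (mem_erase.mp (hAX h)).1 rfl), hAcard]
    rcases B.eq_empty_or_nonempty with hB | hB
    · refine ⟨insert x A, ∅, hsubX, empty_subset _, hcardins, ?_, by simp⟩
      subst hB; simpa using hYB
    · have hκ : Nonempty κ := ⟨f x hB.choose⟩
      obtain ⟨γ0, -, hmax⟩ := Finset.exists_max_image Finset.univ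
        (fun γ => (B.filter fun b => f x b = γ).card) univ_nonempty
      set B' := B.filter fun b => f x b = γ0 with hB'
      have hsum : B.card = ∑ γ ∈ Finset.univ, (B.filter fun b => f x b = γ).card :=
        card_eq_sum_card_fiberwise (fun b _ => mem_univ _)
      have hBle : B.card ≤ c * B'.card := by
        calc B.card = ∑ γ ∈ Finset.univ, (B.filter fun b => f x b = γ).card := hsum
          _ ≤ Finset.univ.card • B'.card :=
              Finset.sum_le_card_nsmul _ _ _ (fun γ _ => hmax γ (mem_univ _))
          _ = Fintype.card κ * B'.card := by rw [smul_eq_mul, card_univ]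
          _ ≤ c * B'.card := Nat.mul_le_mul_right _ hc
      refine ⟨insert x A, B', hsubX, (filter_subset _ _).trans hBY, hcardins, ?_, ?_⟩
      · calc Y.card ≤ c ^ m * B.card := hYB
          _ ≤ c ^ m * (c * B'.card) := Nat.mul_le_mul_left _ hBle
          _ = c ^ (m + 1) * B'.card := by ring
      · intro a ha b hb b' hb'
        rcases mem_insert.mp ha with rfl | ha
        · rw [(mem_filter.mp hb).2, (mem_filter.mp hb').2]
        · exact hrows a ha b (filter_subset _ _ hb) b' (filter_subset _ _ hb')

/-- Bipartite multicolour Ramsey theorem. -/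
lemma biRamsey (κ : Type) [Fintype κ] [DecidableEq κ] [Nonempty κ] (k : ℕ) :
    ∃ n : ℕ, ∀ (α β : Type) [DecidableEq α] [DecidableEq β]
      (X : Finset α) (Y : Finset β) (f : α → β → κ), n ≤ X.card → n ≤ Y.card →
      ∃ A B, A ⊆ X ∧ B ⊆ Y ∧ A.card = k ∧ B.card = k ∧
        ∃ γ, ∀ a ∈ A, ∀ b ∈ B, f a b = γ := by
  classical
  rcases Nat.eq_zero_or_pos k with rfl | hk
  · exact ⟨0, fun α β _ _ X Y f _ _ =>
      ⟨∅, ∅, empty_subset _, empty_subset _, card_empty, card_empty,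
        Classical.arbitrary κ, by simp⟩⟩
  set c := Fintype.card κ + 1 with hcdef
  set m := c * k + 1 with hmdef
  refine ⟨max m (c ^ m * k), ?_⟩
  intro α β _ _ X Y f hX hY
  obtain ⟨A, B, hAX, hBY, hAcard, hYB, hrows⟩ :=
    rowLemma κ c (by omega) m α β X Y f (le_trans (le_max_left _ _) hX)
  have hBk : k ≤ B.card := by
    have h1 : c ^ m * k ≤ c ^ m * B.card :=
      le_trans (le_trans (le_max_right _ _) hY) hYB
    exact Nat.le_of_mul_le_mul_left h1 ((Nat.pow_pos (n := m) (by omega)))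
  have hBne : B.Nonempty := card_pos.mp (by omega)
  set b0 := hBne.choose with hb0def
  have hb0 : b0 ∈ B := hBne.choose_spec
  -- each row a ∈ A is monochromatic on B with colour f a b0
  have hrow : ∀ a ∈ A, ∀ b ∈ B, f a b = f a b0 := fun a ha b hb => hrows a ha b hb b0 hb0
  -- pigeonhole over rows
  obtain ⟨γ0, -, hmax⟩ := Finset.exists_max_image Finset.univ
    (fun γ => (A.filter fun a => f a b0 = γ).card) univ_nonempty
  set A1 := A.filter fun a => f a b0 = γ0 with hA1
  have hsum : A.card = ∑ γ ∈ Finset.univ, (A.filter fun a => f a b0 = γ).card :=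
    card_eq_sum_card_fiberwise (fun a _ => mem_univ _)
  have hAle : A.card ≤ Fintype.card κ * A1.card := by
    calc A.card = ∑ γ ∈ Finset.univ, (A.filter fun a => f a b0 = γ).card := hsum
      _ ≤ Finset.univ.card • A1.card :=
          Finset.sum_le_card_nsmul _ _ _ (fun γ _ => hmax γ (mem_univ _))
      _ = Fintype.card κ * A1.card := by rw [smul_eq_mul, card_univ]
  have hA1k : k ≤ A1.card := by
    by_contra hcon
    push_neg at hcon
    have : Fintype.card κ * A1.card ≤ Fintype.card κ * (k - 1) :=
      Nat.mul_le_mul_left _ (by omega)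
    have hκpos : 1 ≤ Fintype.card κ := Fintype.card_pos
    nlinarith [hAcard, hAle]
  obtain ⟨A', hA'sub, hA'card⟩ := Finset.exists_subset_card_eq hA1k
  obtain ⟨B', hB'sub, hB'card⟩ := Finset.exists_subset_card_eq hBk
  refine ⟨A', B', (hA'sub.trans (filter_subset _ _)).trans hAX, hB'sub.trans hBY,
    hA'card, hB'card, γ0, ?_⟩
  intro a ha b hb
  have haA1 := hA'sub ha
  rw [hrow a (filter_subset _ _ haA1) b (hB'sub hb), (mem_filter.mp haA1).2]

/-- The two-collection lemma. -/
lemma pairLemma (r h : ℕ) (hr : 0 < r) (hh : 0 < h) (w : ℕ) :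
    ∃ s : ℕ, ∀ (W : Type) [DecidableEq W] (G : SimpleGraph W), NoKrr r G →
      ∀ C₁ C₂ : Finset (Finset W),
        ((C₁ : Set (Finset W)).Pairwise fun S T => Disjoint S T) →
        ((C₂ : Set (Finset W)).Pairwise fun S T => Disjoint S T) →
        (∀ S ∈ C₁, S.card ≤ h) → (∀ S ∈ C₂, S.card ≤ h) →
        s ≤ C₁.card → s ≤ C₂.card →
        ∃ D₁ D₂, D₁ ⊆ C₁ ∧ D₂ ⊆ C₂ ∧ w ≤ D₁.card ∧ w ≤ D₂.card ∧
          ∀ S ∈ D₁, ∀ T ∈ D₂, SepG G S T := by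
  classical
  set κ := Option (Fin h × Fin h ⊕ Fin h) with hκdef
  set k := max 2 (max r w) with hkdef
  obtain ⟨n, hn⟩ := biRamsey κ k
  refine ⟨n, ?_⟩
  intro W _ G hG C₁ C₂ hP₁ hP₂ hh₁ hh₂ hs₁ hs₂
  -- position of a vertex inside a finset
  set idx : Finset W → W → Fin h := fun S v => ⟨S.toList.idxOf v % h, Nat.mod_lt _ hh⟩
    with hidxdef
  have idx_unique : ∀ (S : Finset W), S.card ≤ h → ∀ v ∈ S, ∀ v' ∈ S,
      idx S v = idx S v' → v = v' := by
    intro S hS v hv v' hv' hvv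
    have hv1 : v ∈ S.toList := Finset.mem_toList.mpr hv
    have hv2 : v' ∈ S.toList := Finset.mem_toList.mpr hv'
    have h1 : S.toList.idxOf v < h := by
      have := List.idxOf_lt_length_iff.mpr hv1
      rw [Finset.length_toList] at this; omega
    have h2 : S.toList.idxOf v' < h := by
      have := List.idxOf_lt_length_iff.mpr hv2
      rw [Finset.length_toList] at this; omega
    have : S.toList.idxOf v % h = S.toList.idxOf v' % h := congrArg Fin.val hvv
    rw [Nat.mod_eq_of_lt h1, Nat.mod_eq_of_lt h2] at this
    exact (List.idxOf_inj hv1).mp this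
  set f : Finset W → Finset W → κ := fun S T =>
    if hI : ∃ v, v ∈ S ∧ v ∈ T then some (Sum.inr (idx S hI.choose))
    else if hA : ∃ q : W × W, q.1 ∈ S ∧ q.2 ∈ T ∧ G.Adj q.1 q.2 then
      some (Sum.inl (idx S hA.choose.1, idx T hA.choose.2))
    else none
    with hfdef
  obtain ⟨A, B, hAC, hBC, hAcard, hBcard, γ, hγ⟩ := hn _ _ C₁ C₂ f hs₁ hs₂
  have hk2 : 2 ≤ k := le_max_left _ _
  have hkr : r ≤ k := le_trans (le_max_left _ _) (le_max_right _ _)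
  have hkw : w ≤ k := le_trans (le_max_right _ _) (le_max_right _ _)
  rcases γ with - | γ'
  · -- all pairs separated
    refine ⟨A, B, hAC, hBC, by omega, by omega, ?_⟩
    intro S hS T hT
    have hST := hγ S hS T hT
    simp only [hfdef] at hST
    by_cases hI : ∃ v, v ∈ S ∧ v ∈ T
    · rw [dif_pos hI] at hST; exact absurd hST (by simp)
    · rw [dif_neg hI] at hST
      by_cases hA : ∃ q : W × W, q.1 ∈ S ∧ q.2 ∈ T ∧ G.Adj q.1 q.2
      · rw [dif_pos hA] at hST; exact absurd hST (by simp)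
      · push_neg at hI hA
        refine ⟨Finset.disjoint_left.mpr (fun {v} hv hv' => hI v hv hv'), ?_⟩
        intro a ha b hb hab
        exact hA (a, b) ha hb hab
  rcases γ' with ⟨a, b⟩ | a
  · -- adjacency colour: build a K_{r,r}, contradiction
    exfalso
    -- key claim
    have hclaim : ∀ S ∈ A, ∀ T ∈ B, ∃ u v, u ∈ S ∧ v ∈ T ∧ G.Adj u v ∧
        idx S u = a ∧ idx T v = b := by
      intro S hS T hT
      have hST := hγ S hS T hT
      simp only [hfdef] at hST
      by_cases hI : ∃ v, v ∈ S ∧ v ∈ T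
      · rw [dif_pos hI] at hST
        exact absurd (Option.some_injective _ hST) Sum.inr_ne_inl
      rw [dif_neg hI] at hST
      by_cases hA : ∃ q : W × W, q.1 ∈ S ∧ q.2 ∈ T ∧ G.Adj q.1 q.2
      · rw [dif_pos hA] at hST
        obtain ⟨h1, h2, h3⟩ := hA.choose_spec
        have := Option.some_injective _ hST
        have hab := Sum.inl_injective this
        refine ⟨hA.choose.1, hA.choose.2, h1, h2, h3, ?_, ?_⟩
        · exact congrArg Prod.fst hab
        · exact congrArg Prod.snd hab
      · rw [dif_neg hA] at hST; exact absurd hST (by simp)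
    have hAne : A.Nonempty := card_pos.mp (by omega)
    have hBne : B.Nonempty := card_pos.mp (by omega)
    obtain ⟨S0, hS0⟩ := hAne
    obtain ⟨T0, hT0⟩ := hBne
    obtain ⟨u0, v0, hu0, -, -, -, -⟩ := hclaim S0 hS0 T0 hT0
    haveI : Inhabited W := ⟨u0⟩
    set uFun : Finset W → W := fun S =>
      if hS : ∃ u, u ∈ S ∧ idx S u = a then hS.choose else default with huFdef
    set vFun : Finset W → W := fun T =>
      if hT : ∃ v, v ∈ T ∧ idx T v = b then hT.choose else default with hvFdef
    have huFun : ∀ S ∈ A, uFun S ∈ S ∧ idx S (uFun S) = a := by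
      intro S hS
      obtain ⟨u, v, h1, -, -, h4, -⟩ := hclaim S hS T0 hT0
      have hex : ∃ u, u ∈ S ∧ idx S u = a := ⟨u, h1, h4⟩
      rw [huFdef]; simp only [dif_pos hex]
      exact hex.choose_spec
    have hvFun : ∀ T ∈ B, vFun T ∈ T ∧ idx T (vFun T) = b := by
      intro T hT
      obtain ⟨u, v, -, h2, -, -, h5⟩ := hclaim S0 hS0 T hT
      have hex : ∃ v, v ∈ T ∧ idx T v = b := ⟨v, h2, h5⟩
      rw [hvFdef]; simp only [dif_pos hex]
      exact hex.choose_spec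
    have hadj : ∀ S ∈ A, ∀ T ∈ B, G.Adj (uFun S) (vFun T) := by
      intro S hS T hT
      obtain ⟨u, v, h1, h2, h3, h4, h5⟩ := hclaim S hS T hT
      have hu : u = uFun S :=
        idx_unique S (hh₁ S (hAC hS)) u h1 (uFun S) (huFun S hS).1
          (by rw [h4, (huFun S hS).2])
      have hv : v = vFun T :=
        idx_unique T (hh₂ T (hBC hT)) v h2 (vFun T) (hvFun T hT).1
          (by rw [h5, (hvFun T hT).2])
      rwa [hu, hv] at h3
    obtain ⟨A0, hA0sub, hA0card⟩ := Finset.exists_subset_card_eq (hkr.trans hAcard.ge)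
    obtain ⟨B0, hB0sub, hB0card⟩ := Finset.exists_subset_card_eq (hkr.trans hBcard.ge)
    refine hG ⟨A0.image uFun, B0.image vFun, ?_, ?_, ?_, ?_⟩
    · rw [Finset.card_image_of_injOn, hA0card]
      intro S hS S' hS' hSS
      by_contra hne
      have hd := hP₁ (hAC (hA0sub hS)) (hAC (hA0sub hS')) hne
      exact Finset.disjoint_left.mp hd (huFun S (hA0sub hS)).1
        (hSS ▸ (huFun S' (hA0sub hS')).1)
    · rw [Finset.card_image_of_injOn, hB0card]
      intro T hT T' hT' hTT
      by_contra hne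
      have hd := hP₂ (hBC (hB0sub hT)) (hBC (hB0sub hT')) hne
      exact Finset.disjoint_left.mp hd (hvFun T (hB0sub hT)).1
        (hTT ▸ (hvFun T' (hB0sub hT')).1)
    · rw [Finset.disjoint_left]
      rintro x hxU hxV
      obtain ⟨S, hS, rfl⟩ := Finset.mem_image.mp hxU
      obtain ⟨T, hT, hTx⟩ := Finset.mem_image.mp hxV
      have := hadj S (hA0sub hS) T (hB0sub hT)
      rw [hTx] at this
      exact G.irrefl this
    · rintro x hxU y hyV
      obtain ⟨S, hS, rfl⟩ := Finset.mem_image.mp hxU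
      obtain ⟨T, hT, rfl⟩ := Finset.mem_image.mp hyV
      exact hadj S (hA0sub hS) T (hB0sub hT)
  · -- intersection colour: contradicts disjointness within C₂
    exfalso
    have hclaim : ∀ S ∈ A, ∀ T ∈ B, ∃ v, v ∈ S ∧ v ∈ T ∧ idx S v = a := by
      intro S hS T hT
      have hST := hγ S hS T hT
      simp only [hfdef] at hST
      by_cases hI : ∃ v, v ∈ S ∧ v ∈ T
      · rw [dif_pos hI] at hST
        have := Option.some_injective _ hST
        have hidx := Sum.inr_injective this
        exact ⟨hI.choose, hI.choose_spec.1, hI.choose_spec.2, hidx⟩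
      · rw [dif_neg hI] at hST
        by_cases hA : ∃ q : W × W, q.1 ∈ S ∧ q.2 ∈ T ∧ G.Adj q.1 q.2
        · rw [dif_pos hA] at hST
          exact absurd (Option.some_injective _ hST) Sum.inl_ne_inr
        · rw [dif_neg hA] at hST; exact absurd hST (by simp)
    have hAne : A.Nonempty := card_pos.mp (by omega)
    obtain ⟨S0, hS0⟩ := hAne
    obtain ⟨T, hT, T', hT', hTT⟩ := Finset.one_lt_card.mp (by omega : 1 < B.card)
    obtain ⟨v, hv1, hv2, hv3⟩ := hclaim S0 hS0 T hT
    obtain ⟨v', hv1', hv2', hv3'⟩ := hclaim S0 hS0 T' hT'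
    have : v = v' :=
      idx_unique S0 (hh₁ S0 (hAC hS0)) v hv1 v' hv1' (by rw [hv3, hv3'])
    have hd := hP₂ (hBC hT) (hBC hT') hTT
    exact Finset.disjoint_left.mp hd hv2 (this ▸ hv2')

/-- One collection against many. -/
lemma manyLemma (r h : ℕ) (hr : 0 < r) (hh : 0 < h) :
    ∀ (p w : ℕ), ∃ s : ℕ, ∀ (W : Type) [DecidableEq W] (G : SimpleGraph W), NoKrr r G →
      ∀ (D : Fin p → Finset (Finset W)) (E : Finset (Finset W)),
        (∀ i, ((D i : Set (Finset W)).Pairwise fun S T => Disjoint S T)) →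
        ((E : Set (Finset W)).Pairwise fun S T => Disjoint S T) →
        (∀ i, ∀ S ∈ D i, S.card ≤ h) → (∀ S ∈ E, S.card ≤ h) →
        (∀ i, s ≤ (D i).card) → s ≤ E.card →
        ∃ (D' : Fin p → Finset (Finset W)) (E' : Finset (Finset W)),
          (∀ i, D' i ⊆ D i) ∧ E' ⊆ E ∧ (∀ i, w ≤ (D' i).card) ∧ w ≤ E'.card ∧
          ∀ i, ∀ S ∈ D' i, ∀ T ∈ E', SepG G S T := by
  intro p
  induction p with
  | zero =>
    intro w
    exact ⟨w, fun W _ G _ D E _ _ _ _ _ hE =>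
      ⟨D, E, fun i => subset_rfl, subset_rfl, fun i => i.elim0, hE,
        fun i => i.elim0⟩⟩
  | succ p ih =>
    intro w
    obtain ⟨sp, hsp⟩ := ih w
    obtain ⟨s₂, hs₂⟩ := pairLemma r h hr hh (max w sp)
    refine ⟨max s₂ sp, ?_⟩
    intro W _ G hG D E hPD hPE hhD hhE hsD hsE
    obtain ⟨Dl, E₁, hDlsub, hE₁sub, hDlcard, hE₁card, hDlE₁⟩ :=
      hs₂ W G hG (D (Fin.last p)) E (hPD _) hPE (hhD _) hhE
        (le_trans (le_max_left _ _) (hsD _)) (le_trans (le_max_left _ _) hsE)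
    obtain ⟨D'', E', hD''sub, hE'sub, hD''card, hE'card, hD''E'⟩ :=
      hsp W G hG (fun i => D i.castSucc) E₁
        (fun i => hPD _) (hPE.mono (by exact_mod_cast hE₁sub))
        (fun i => hhD _) (fun S hS => hhE S (hE₁sub hS))
        (fun i => le_trans (le_max_right _ _) (hsD _))
        (le_trans (le_max_right _ _) hE₁card)
    refine ⟨Fin.lastCases Dl D'', E', ?_, hE'sub.trans hE₁sub, ?_, hE'card, ?_⟩
    · intro i
      induction i using Fin.lastCases with
      | last => simpa using hDlsub
      | cast i => simpa using hD''sub i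
    · intro i
      induction i using Fin.lastCases with
      | last => simpa using le_trans (le_max_left _ _) hDlcard
      | cast i => simpa using hD''card i
    · intro i S hS T hT
      induction i using Fin.lastCases with
      | last =>
        simp only [Fin.lastCases_last] at hS
        exact hDlE₁ S hS T (hE'sub hT)
      | cast i =>
        simp only [Fin.lastCases_castSucc] at hS
        exact hD''E' i S hS T hT

/-- Main induction: `p` collections, subcollections of size at least `w`. -/
lemma mainLemma (r h : ℕ) (hr : 0 < r) (hh : 0 < h) :
    ∀ (p w : ℕ), ∃ s : ℕ, ∀ (W : Type) [DecidableEq W] (G : SimpleGraph W), NoKrr r G →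
      ∀ C : Fin p → Finset (Finset W),
        (∀ i, ((C i : Set (Finset W)).Pairwise fun S T => Disjoint S T)) →
        (∀ i, ∀ S ∈ C i, S.card ≤ h) →
        (∀ i, s ≤ (C i).card) →
        ∃ C' : Fin p → Finset (Finset W),
          (∀ i, C' i ⊆ C i) ∧ (∀ i, w ≤ (C' i).card) ∧
          ∀ i₁ i₂ : Fin p, i₁ < i₂ → ∀ S ∈ C' i₁, ∀ T ∈ C' i₂, SepG G S T := by
  intro p
  induction p with
  | zero =>
    intro w
    exact ⟨w, fun W _ G _ C _ _ _ =>
      ⟨C, fun i => subset_rfl, fun i => i.elim0, fun i => i.elim0⟩⟩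
  | succ p ih =>
    intro w
    obtain ⟨sm, hsm⟩ := manyLemma r h hr hh p w
    obtain ⟨sq, hsq⟩ := ih (max w sm)
    refine ⟨max sq sm, ?_⟩
    intro W _ G hG C hPC hhC hsC
    obtain ⟨D, hDsub, hDcard, hDsep⟩ :=
      hsq W G hG (fun i => C i.castSucc)
        (fun i => hPC _) (fun i => hhC _)
        (fun i => le_trans (le_max_left _ _) (hsC _))
    obtain ⟨D', E', hD'sub, hE'sub, hD'card, hE'card, hD'E'⟩ :=
      hsm W G hG D (C (Fin.last p))
        (fun i => (hPC _).mono (by exact_mod_cast hDsub i)) (hPC _)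
        (fun i S hS => hhC _ S (hDsub i hS)) (hhC _)
        (fun i => le_trans (le_max_right _ _) (hDcard i))
        (le_trans (le_max_right _ _) (hsC _))
    refine ⟨Fin.lastCases E' D', ?_, ?_, ?_⟩
    · intro i
      induction i using Fin.lastCases with
      | last => simpa using hE'sub
      | cast i => simpa using (hD'sub i).trans (hDsub i)
    · intro i
      induction i using Fin.lastCases with
      | last => simpa using hE'card
      | cast i => simpa using hD'card i
    · intro i₁ i₂ hlt S hS T hT
      induction i₂ using Fin.lastCases with
      | last =>
        simp only [Fin.lastCases_last] at hT
        induction i₁ using Fin.lastCases with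
        | last => exact absurd hlt (lt_irrefl _)
        | cast j₁ =>
          simp only [Fin.lastCases_castSucc] at hS
          exact hD'E' j₁ S hS T hT
      | cast j₂ =>
        induction i₁ using Fin.lastCases with
        | last =>
          exact absurd (hlt.trans (Fin.castSucc_lt_last j₂)) (lt_irrefl _)
        | cast j₁ =>
          simp only [Fin.lastCases_castSucc] at hS hT
          exact hDsep j₁ j₂ (Fin.castSucc_lt_castSucc_iff.mp hlt) S (hD'sub j₁ hS)
            T (hD'sub j₂ hT)

theorem stmt8 (r h w p : ℕ) (hr : 0 < r) (hh : 0 < h) (hw : 0 < w) (hp : 0 < p) :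
    ∃ s : ℕ, 0 < s ∧
      ∀ (W : Type) [Fintype W] [DecidableEq W] (G : SimpleGraph W),
        (¬ ∃ A B : Finset W, A.card = r ∧ B.card = r ∧ Disjoint A B ∧
            ∀ a ∈ A, ∀ b ∈ B, G.Adj a b) →
        ∀ C : Fin p → Finset (Finset W),
          (∀ i, ((C i : Set (Finset W)).Pairwise fun S T => Disjoint S T)) →
          (∀ i, ∀ S ∈ C i, S.card ≤ h) →
          (∀ i, s ≤ (C i).card) →
          ∃ C' : Fin p → Finset (Finset W),
            (∀ i, C' i ⊆ C i) ∧ (∀ i, (C' i).card = w) ∧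
            ∀ i₁ i₂ : Fin p, i₁ < i₂ →
              ∀ S ∈ C' i₁, ∀ T ∈ C' i₂, Disjoint S T ∧ ∀ a ∈ S, ∀ b ∈ T, ¬ G.Adj a b := by
  classical
  obtain ⟨s, hs⟩ := mainLemma r h hr hh p w
  refine ⟨max s 1, by omega, ?_⟩
  intro W _ _ G hG C hPC hhC hsC
  obtain ⟨C', hC'sub, hC'card, hC'sep⟩ :=
    hs W G hG C hPC hhC (fun i => le_trans (le_max_left _ _) (hsC i))
  have hex : ∀ i, ∃ t ⊆ C' i, t.card = w := fun i =>
    Finset.exists_subset_card_eq (hC'card i)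
  choose C'' hC''sub hC''card using hex
  refine ⟨C'', fun i => (hC''sub i).trans (hC'sub i), hC''card, ?_⟩
  intro i₁ i₂ hlt S hS T hT
  exact hC'sep i₁ i₂ hlt S (hC''sub i₁ hS) T (hC''sub i₂ hT)
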